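/- Let V be a finite-dimensional complex inner product space, Δ > 0, and let W : ℝ → ℝ be integrable, odd on ℝ ∖ {0}, with ∫_ℝ W(t) e^{i t λ} dt = i/λ for all real λ with |λ| ≥ Δ. Let H : [0, s] → (self-adjoint operators on V) be continuously differentiable, such that for every θ ∈ [0, s] the lowest eigenvalue E0(θ) of H(θ) is simple and every other eigenvalue E of H(θ) satisfies E − E0(θ) ≥ Δ. Let ψ0 : [0, s] → V be a continuously differentiable family of unit ground-state eigenvectors satisfying the parallel transport condition ⟨ψ0(θ), ∂_θ ψ0(θ)⟩ = 0. Define S(θ) = ∫_ℝ W(t) e^{itH(θ)} (∂_θ H(θ)) e^{−itH(θ)} dt and let U : [0, s] → (operators on V) solve ∂_θ U(θ) = i S(θ) U(θ) with U(0) = I. Then U(θ) ψ0(0) = ψ0(θ) for every θ ∈ [0, s]. -/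

import Mathlib

open scoped ComplexInnerProductSpace
open MeasureTheory

set_option maxHeartbeats 1000000

section helpers
variable {V : Type*} [NormedAddCommGroup V] [InnerProductSpace ℂ V] [FiniteDimensional ℂ V]

variable {V : Type*} [NormedAddCommGroup V] [InnerProductSpace ℂ V] [FiniteDimensional ℂ V]

lemma exp_apply_eigen (A : V →L[ℂ] V) (v : V) (c : ℂ) (h : A v = c • v) :
    NormedSpace.exp A v = Complex.exp c • v := by
  have hpow : ∀ n : ℕ, (A ^ n) v = c ^ n • v := by
    intro n; induction n with
    | zero => simp
    | succ n ih =>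
      rw [pow_succ, pow_succ, ContinuousLinearMap.mul_apply, h, _root_.map_smul, ih, smul_smul,
        mul_comm]
  have hsum : Summable (fun n : ℕ => ((n.factorial : ℂ))⁻¹ • A ^ n) := NormedSpace.expSeries_summable' A
  have hsum2 : Summable (fun n : ℕ => ((n.factorial : ℂ))⁻¹ • c ^ n) :=
    NormedSpace.expSeries_summable' (𝔸 := ℂ) c
  calc NormedSpace.exp A v = (∑' n : ℕ, ((n.factorial : ℂ))⁻¹ • A ^ n) v := by
        rw [NormedSpace.exp_eq_tsum ℂ]
    _ = ∑' n : ℕ, (((n.factorial : ℂ))⁻¹ • A ^ n) v := by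
        exact ((ContinuousLinearMap.apply ℂ V v).map_tsum hsum)
    _ = ∑' n : ℕ, (((n.factorial : ℂ))⁻¹ • c ^ n) • v := by
        refine tsum_congr fun n => ?_
        rw [ContinuousLinearMap.smul_apply, hpow, smul_smul, smul_eq_mul]
    _ = (∑' n : ℕ, ((n.factorial : ℂ))⁻¹ • c ^ n) • v := hsum2.tsum_smul_const v
    _ = Complex.exp c • v := by
        rw [Complex.exp_eq_exp_ℂ, NormedSpace.exp_eq_tsum ℂ]

lemma exp_skew_norm_le_one [CompleteSpace V] (A : V →L[ℂ] V) (hA : IsSelfAdjoint A) (z : ℂ)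
    (hz : (starRingEnd ℂ) z = -z) : ‖NormedSpace.exp (z • A)‖ ≤ 1 := by
  have hstar : star (z • A) = -(z • A) := by
    rw [star_smul, hA.star_eq, show star z = -z from hz, neg_smul]
  let +nondep : NormedAlgebra ℚ (V →L[ℂ] V) := .restrictScalars ℚ ℂ _
  have h1 : NormedSpace.exp (-(z • A)) * NormedSpace.exp (z • A) = 1 := by
    rw [← NormedSpace.exp_add_of_commute ((Commute.refl (z • A)).neg_left), neg_add_cancel,
      NormedSpace.exp_zero]
  have h2 : ‖NormedSpace.exp (z • A)‖ * ‖NormedSpace.exp (z • A)‖ = ‖(1 : V →L[ℂ] V)‖ := by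
    rw [← CStarRing.norm_star_mul_self, NormedSpace.star_exp, hstar, h1]
  have h3 : ‖(1 : V →L[ℂ] V)‖ ≤ 1 := ContinuousLinearMap.norm_id_le
  nlinarith [norm_nonneg (NormedSpace.exp (z • A))]

lemma odd_integral_zero (W : ℝ → ℝ) (hWint : Integrable W)
    (hWodd : ∀ t : ℝ, t ≠ 0 → W (-t) = -W t) : ∫ t : ℝ, W t = 0 := by
  have h1 : ∫ t : ℝ, W (-t) = ∫ t : ℝ, W t := integral_neg_eq_self W volume
  have h2 : ∫ t : ℝ, W (-t) = ∫ t : ℝ, -W t := by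
    refine integral_congr_ae ?_
    refine Filter.eventuallyEq_of_mem (s := {(0:ℝ)}ᶜ) ?_ fun t ht => hWodd t ht
    simp [MeasureTheory.mem_ae_iff]
  rw [h2, integral_neg] at h1
  linarith

lemma quasi_key (Δ : ℝ) (hΔ : 0 < Δ) (W : ℝ → ℝ)
    (hWint : Integrable W)
    (hWodd : ∀ t : ℝ, t ≠ 0 → W (-t) = -W t)
    (hWfourier : ∀ l : ℝ, Δ ≤ |l| →
      ∫ t : ℝ, (W t : ℂ) * Complex.exp (Complex.I * t * l) = Complex.I / l)
    (A A' : V →L[ℂ] V) (E : ℝ) (ψ ψ' : V) (e' : ℂ)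
    (hsa : IsSelfAdjoint A)
    (heig : A ψ = (E : ℂ) • ψ)
    (hsimple : ∀ v : V, A v = (E : ℂ) • v → ∃ c : ℂ, v = c • ψ)
    (hgap : ∀ μ : ℝ, (∃ v : V, v ≠ 0 ∧ A v = (μ : ℂ) • v) → μ = E ∨ Δ ≤ μ - E)
    (hpar : ⟪ψ, ψ'⟫ = 0)
    (hder : A' ψ + A ψ' = e' • ψ + (E : ℂ) • ψ')
    (hFint : Integrable (fun t : ℝ => W t • (NormedSpace.exp ((Complex.I * t) • A) * A' *
        NormedSpace.exp ((-(Complex.I * t)) • A)))) :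
    Complex.I • (∫ t : ℝ, W t • (NormedSpace.exp ((Complex.I * t) • A) * A' *
        NormedSpace.exp ((-(Complex.I * t)) • A))) ψ = ψ' := by
  classical
  have hTsymm : (A : V →ₗ[ℂ] V).IsSymmetric :=
    (ContinuousLinearMap.isSelfAdjoint_iff_isSymmetric).mp hsa
  set n := Module.finrank ℂ V with hn
  let b : OrthonormalBasis (Fin n) ℂ V := hTsymm.eigenvectorBasis rfl
  let μ : Fin n → ℝ := hTsymm.eigenvalues rfl
  have hb : ∀ i, A (b i) = (μ i : ℂ) • b i := fun i => hTsymm.apply_eigenvectorBasis rfl i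
  have hbne : ∀ i, b i ≠ 0 := fun i => b.toBasis.ne_zero i
  -- coefficients
  set c : Fin n → ℂ := fun i => ⟪b i, A' ψ⟫ with hc
  set g : Fin n → ℝ → ℂ := fun i t => (W t : ℂ) * Complex.exp (Complex.I * t * ((μ i - E : ℝ) : ℂ))
    with hg
  -- pointwise value of the integrand applied to ψ
  have hval : ∀ t : ℝ,
      (W t • (NormedSpace.exp ((Complex.I * t) • A) * A' *
        NormedSpace.exp ((-(Complex.I * t)) • A))) ψ = ∑ i, g i t • (c i • b i) := by
    intro t
    have h2 : NormedSpace.exp ((-(Complex.I * t)) • A) ψ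
        = Complex.exp (-(Complex.I * t) * E) • ψ :=
      exp_apply_eigen _ _ _ (by rw [ContinuousLinearMap.smul_apply, heig, smul_smul])
    have h3 : NormedSpace.exp ((Complex.I * t) • A) (A' ψ)
        = ∑ i, (Complex.exp (Complex.I * t * (μ i)) * c i) • b i := by
      conv_lhs => rw [← b.sum_repr (A' ψ), map_sum]
      refine Finset.sum_congr rfl fun i _ => ?_
      rw [_root_.map_smul, exp_apply_eigen _ _ (Complex.I * t * (μ i))
        (by rw [ContinuousLinearMap.smul_apply, hb i, smul_smul, mul_comm]), smul_smul,
        b.repr_apply_apply, mul_comm]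
    rw [ContinuousLinearMap.smul_apply, ContinuousLinearMap.mul_apply,
      ContinuousLinearMap.mul_apply, h2, _root_.map_smul, _root_.map_smul, h3,
      Finset.smul_sum, Finset.smul_sum]
    refine Finset.sum_congr rfl fun i _ => ?_
    rw [← Complex.coe_smul, smul_smul, smul_smul, smul_smul]
    congr 1
    rw [hg]
    push_cast
    rw [show Complex.I * (t : ℂ) * ((μ i : ℂ) - (E : ℂ))
      = -(Complex.I * t) * E + Complex.I * t * (μ i) by ring, Complex.exp_add]
    ring
  -- integrability of each scalar coefficient function
  have hgint : ∀ i, Integrable (g i) := by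
    intro i
    refine Integrable.mono' (g := fun t => |W t|) hWint.abs ?_ ?_
    · refine (Complex.continuous_ofReal.comp_aestronglyMeasurable
        hWint.aestronglyMeasurable).mul ?_
      exact (Complex.continuous_exp.comp (by continuity)).aestronglyMeasurable
    · refine Filter.Eventually.of_forall fun t => ?_
      rw [hg]
      simp only [norm_mul, Complex.norm_real]
      have : ‖Complex.exp (Complex.I * t * ((μ i - E : ℝ) : ℂ))‖ = 1 := by
        rw [Complex.norm_exp]
        have : (Complex.I * t * ((μ i - E : ℝ) : ℂ)).re = 0 := by simp
        rw [this, Real.exp_zero]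
      rw [this, mul_one, Real.norm_eq_abs]
  -- compute the integral
  have hInt : (∫ t : ℝ, W t • (NormedSpace.exp ((Complex.I * t) • A) * A' *
        NormedSpace.exp ((-(Complex.I * t)) • A))) ψ
      = ∑ i, (∫ t : ℝ, g i t) • (c i • b i) := by
    rw [ContinuousLinearMap.integral_apply hFint ψ]
    rw [integral_congr_ae (Filter.Eventually.of_forall hval)]
    rw [integral_finset_sum _ (fun i _ => (hgint i).smul_const (c i • b i))]
    exact Finset.sum_congr rfl fun i _ => (integral_smul_const (g i) (c i • b i))
  -- per-index evaluation
  have hterm : ∀ i, Complex.I • ((∫ t : ℝ, g i t) • (c i • b i)) = b.repr ψ' i • b i := by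
    intro i
    have hortho : μ i ≠ E → ⟪b i, ψ⟫ = 0 := by
      intro hne
      have h1 : ⟪b i, A ψ⟫ = (E : ℂ) * ⟪b i, ψ⟫ := by rw [heig, inner_smul_right]
      have h2 : ⟪b i, A ψ⟫ = (μ i : ℂ) * ⟪b i, ψ⟫ := by
        have h := hTsymm (b i) ψ
        simp only [ContinuousLinearMap.coe_coe] at h
        rw [← h, hb i, inner_smul_left]
        simp
      have : ((μ i : ℂ) - E) * ⟪b i, ψ⟫ = 0 := by rw [sub_mul, ← h1, ← h2, sub_self]
      rcases mul_eq_zero.mp this with h | h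
      · exfalso; apply hne
        have := sub_eq_zero.mp h
        exact_mod_cast this
      · exact h
    rcases eq_or_ne (μ i) E with hE | hE
    · -- eigenvalue equals E : both sides vanish
      have hg0 : (∫ t : ℝ, g i t) = 0 := by
        have : ∀ t, g i t = ((W t : ℝ) : ℂ) := by
          intro t; rw [hg]; simp [hE]
        have hW0 : ∫ t : ℝ, W t = 0 := by
          have h1 : ∫ t : ℝ, W (-t) = ∫ t : ℝ, W t := integral_neg_eq_self W volume
          have h2 : ∫ t : ℝ, W (-t) = ∫ t : ℝ, -W t := by
            refine integral_congr_ae ?_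
            refine Filter.eventuallyEq_of_mem (s := {(0:ℝ)}ᶜ) ?_ fun t ht => hWodd t ht
            simp [MeasureTheory.mem_ae_iff]
          rw [h2, integral_neg] at h1
          linarith
        have h3 := Complex.ofRealCLM.integral_comp_comm hWint
        simp only [Complex.ofRealCLM_apply] at h3
        rw [integral_congr_ae (Filter.Eventually.of_forall this), h3, hW0]
        simp
      have hrepr0 : b.repr ψ' i = 0 := by
        obtain ⟨d, hd⟩ := hsimple (b i) (by rw [hb i, hE])
        rw [b.repr_apply_apply, hd, inner_smul_left, hpar, mul_zero]
      rw [hg0, hrepr0]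
      simp
    · -- gap case
      have hgapi : Δ ≤ μ i - E := by
        rcases hgap (μ i) ⟨b i, hbne i, hb i⟩ with h | h
        · exact absurd h hE
        · exact h
      have hlam : (μ i - E : ℝ) ≠ 0 := ne_of_gt (by linarith)
      have hgI : (∫ t : ℝ, g i t) = Complex.I / ((μ i - E : ℝ) : ℂ) := by
        rw [hg]
        exact hWfourier (μ i - E) (by rw [abs_of_pos (by linarith)]; exact hgapi)
      have hci : c i = ((E - μ i : ℝ) : ℂ) * ⟪b i, ψ'⟫ := by
        have h1 : ⟪b i, A' ψ⟫ = ⟪b i, e' • ψ + (E : ℂ) • ψ'⟫ - ⟪b i, A ψ'⟫ := by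
          rw [← inner_sub_right]
          congr 1
          rw [← hder]; abel
        have h2 : ⟪b i, A ψ'⟫ = (μ i : ℂ) * ⟪b i, ψ'⟫ := by
          have h := hTsymm (b i) ψ'
          simp only [ContinuousLinearMap.coe_coe] at h
          rw [← h, hb i, inner_smul_left]
          simp
        show (⟪b i, A' ψ⟫ : ℂ) = _
        rw [h1, h2, inner_add_right, inner_smul_right, inner_smul_right,
          hortho hE, mul_zero, zero_add]
        push_cast
        ring
      have hlamC : ((μ i - E : ℝ) : ℂ) ≠ 0 := Complex.ofReal_ne_zero.mpr hlam
      rw [hgI, hci, b.repr_apply_apply, smul_smul, smul_smul]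
      congr 1
      push_cast at hlamC ⊢
      field_simp
      rw [Complex.I_sq]
      ring
  -- assemble
  rw [hInt, Finset.smul_sum]
  rw [Finset.sum_congr rfl fun i _ => hterm i]
  exact b.sum_repr ψ'

lemma hasDerivWithinAt_clm_apply_c {s : Set ℝ} {x : ℝ} {c : ℝ → V →L[ℂ] V} {c' : V →L[ℂ] V}
    {u : ℝ → V} {u' : V} (hc : HasDerivWithinAt c c' s x) (hu : HasDerivWithinAt u u' s x) :
    HasDerivWithinAt (fun y => (c y) (u y)) (c' (u x) + c x u') s x := by
  have hc2 : HasDerivWithinAt (fun y => (ContinuousLinearMap.restrictScalarsL ℂ V V ℝ ℝ) (c y))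
      ((ContinuousLinearMap.restrictScalarsL ℂ V V ℝ ℝ) c') s x :=
    (ContinuousLinearMap.restrictScalarsL ℂ V V ℝ ℝ).hasFDerivAt.comp_hasDerivWithinAt x hc
  exact hc2.clm_apply hu

end helpers

/-- Quasi-adiabatic evolution exactly transports the parallel-transported
ground state: if `∂_θ U(θ) = i S(θ) U(θ)`, `U(0) = I`, with
`S(θ) = ∫ W(t) e^{itH(θ)} (∂_θ H(θ)) e^{-itH(θ)} dt`, where `W` is integrable, odd away
from `0`, and `∫ W(t) e^{itλ} dt = i/λ` for `|λ| ≥ Δ`, and if the gap of `H(θ)` above its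
simple lowest eigenvalue is at least `Δ` throughout, then `U(θ) ψ0(0) = ψ0(θ)`. -/
theorem quasi_adiabatic_evolution_eq_groundstate
    {V : Type*} [NormedAddCommGroup V] [InnerProductSpace ℂ V] [FiniteDimensional ℂ V]
    (s : ℝ) (hs : 0 ≤ s) (Δ : ℝ) (hΔ : 0 < Δ) (W : ℝ → ℝ)
    (hWint : MeasureTheory.Integrable W)
    (hWodd : ∀ t : ℝ, t ≠ 0 → W (-t) = -W t)
    (hWfourier : ∀ l : ℝ, Δ ≤ |l| →
      ∫ t : ℝ, (W t : ℂ) * Complex.exp (Complex.I * t * l) = Complex.I / l)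
    (H H' : ℝ → V →L[ℂ] V) (E0 : ℝ → ℝ) (ψ0 ψ0' : ℝ → V) (U : ℝ → V →L[ℂ] V)
    (hsa : ∀ θ ∈ Set.Icc 0 s, IsSelfAdjoint (H θ))
    (hH : ∀ θ ∈ Set.Icc 0 s, HasDerivWithinAt H (H' θ) (Set.Icc 0 s) θ)
    (hH'c : ContinuousOn H' (Set.Icc 0 s))
    (hunit : ∀ θ ∈ Set.Icc 0 s, ‖ψ0 θ‖ = 1)
    (heig : ∀ θ ∈ Set.Icc 0 s, H θ (ψ0 θ) = (E0 θ : ℂ) • ψ0 θ)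
    (hsimple : ∀ θ ∈ Set.Icc 0 s, ∀ v : V,
      H θ v = (E0 θ : ℂ) • v → ∃ c : ℂ, v = c • ψ0 θ)
    (hgap : ∀ θ ∈ Set.Icc 0 s, ∀ μ : ℝ,
      (∃ v : V, v ≠ 0 ∧ H θ v = (μ : ℂ) • v) → μ = E0 θ ∨ Δ ≤ μ - E0 θ)
    (hψ0 : ∀ θ ∈ Set.Icc 0 s, HasDerivWithinAt ψ0 (ψ0' θ) (Set.Icc 0 s) θ)
    (hψ0'c : ContinuousOn ψ0' (Set.Icc 0 s))
    (hpar : ∀ θ ∈ Set.Icc 0 s, ⟪ψ0 θ, ψ0' θ⟫ = 0)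
    (hU0 : U 0 = 1)
    (hU : ∀ θ ∈ Set.Icc 0 s, HasDerivWithinAt U
      (Complex.I • ((∫ t : ℝ, W t • (NormedSpace.exp ((Complex.I * t) • H θ) * H' θ *
          NormedSpace.exp ((-(Complex.I * t)) • H θ))) * U θ))
      (Set.Icc 0 s) θ) :
    ∀ θ ∈ Set.Icc 0 s, U θ (ψ0 0) = ψ0 θ := by
  have hVc : CompleteSpace V := FiniteDimensional.complete ℂ V
  rcases eq_or_lt_of_le hs with hs0 | hs0
  · intro θ hθ
    have hθ0 : θ = 0 := le_antisymm (hs0 ▸ hθ.2) hθ.1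
    subst hθ0
    rw [hU0]
    rfl
  set S : ℝ → V →L[ℂ] V := fun θ => ∫ t : ℝ, W t •
    (NormedSpace.exp ((Complex.I * t) • H θ) * H' θ *
      NormedSpace.exp ((-(Complex.I * t)) • H θ)) with hS
  -- conjugation facts
  have hconj1 : ∀ t : ℝ, (starRingEnd ℂ) (Complex.I * t) = -(Complex.I * t) := by
    intro t
    simp [map_mul, Complex.conj_I, Complex.conj_ofReal]
  have hconj2 : ∀ t : ℝ, (starRingEnd ℂ) (-(Complex.I * t)) = -(-(Complex.I * t)) := by
    intro t
    simp [map_mul, Complex.conj_I, Complex.conj_ofReal]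
  -- operator norm bound for H'
  obtain ⟨C, hC⟩ := isCompact_Icc.exists_bound_of_continuousOn hH'c
  -- integrability of the integrand, and bound on S
  have hFint : ∀ θ ∈ Set.Icc 0 s, Integrable (fun t : ℝ =>
      W t • (NormedSpace.exp ((Complex.I * t) • H θ) * H' θ *
        NormedSpace.exp ((-(Complex.I * t)) • H θ))) := by
    intro θ hθ
    have hnormM : ∀ t : ℝ, ‖NormedSpace.exp ((Complex.I * t) • H θ) * H' θ *
        NormedSpace.exp ((-(Complex.I * t)) • H θ)‖ ≤ ‖H' θ‖ := by
      intro t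
      have e1 := exp_skew_norm_le_one (H θ) (hsa θ hθ) _ (hconj1 t)
      have e2 := exp_skew_norm_le_one (H θ) (hsa θ hθ) _ (hconj2 t)
      calc ‖NormedSpace.exp ((Complex.I * t) • H θ) * H' θ *
            NormedSpace.exp ((-(Complex.I * t)) • H θ)‖
          ≤ ‖NormedSpace.exp ((Complex.I * t) • H θ) * H' θ‖ *
            ‖NormedSpace.exp ((-(Complex.I * t)) • H θ)‖ := norm_mul_le _ _
        _ ≤ (‖NormedSpace.exp ((Complex.I * t) • H θ)‖ * ‖H' θ‖) *
            ‖NormedSpace.exp ((-(Complex.I * t)) • H θ)‖ := by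
            gcongr
            exact norm_mul_le _ _
        _ ≤ (1 * ‖H' θ‖) * 1 := by gcongr <;> simp [e1, e2]
        _ = ‖H' θ‖ := by ring
    let +nondep : NormedAlgebra ℚ (V →L[ℂ] V) := .restrictScalars ℚ ℂ _
    have hc1 : Continuous fun t : ℝ => NormedSpace.exp ((Complex.I * t) • H θ) :=
      NormedSpace.exp_continuous.comp
        ((continuous_const.mul Complex.continuous_ofReal).smul continuous_const)
    have hc2 : Continuous fun t : ℝ => NormedSpace.exp ((-(Complex.I * t)) • H θ) :=
      NormedSpace.exp_continuous.comp
        (((continuous_const.mul Complex.continuous_ofReal).neg).smul continuous_const)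
    have hcM : Continuous fun t : ℝ => NormedSpace.exp ((Complex.I * t) • H θ) * H' θ *
        NormedSpace.exp ((-(Complex.I * t)) • H θ) :=
      (hc1.mul continuous_const).mul hc2
    refine Integrable.mono' (g := fun t => ‖H' θ‖ * |W t|) (hWint.abs.const_mul _) ?_ ?_
    · exact hWint.aestronglyMeasurable.smul hcM.aestronglyMeasurable
    · refine Filter.Eventually.of_forall fun t => ?_
      rw [norm_smul, Real.norm_eq_abs]
      calc |W t| * ‖_‖ ≤ |W t| * ‖H' θ‖ := mul_le_mul_of_nonneg_left (hnormM t) (abs_nonneg _)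
        _ = ‖H' θ‖ * |W t| := mul_comm _ _
  have hSb : ∀ θ ∈ Set.Icc 0 s, ‖S θ‖ ≤ C * ∫ t : ℝ, |W t| := by
    intro θ hθ
    have hnormM : ∀ t : ℝ, ‖W t • (NormedSpace.exp ((Complex.I * t) • H θ) * H' θ *
        NormedSpace.exp ((-(Complex.I * t)) • H θ))‖ ≤ C * |W t| := by
      intro t
      rw [norm_smul, Real.norm_eq_abs]
      have e1 := exp_skew_norm_le_one (H θ) (hsa θ hθ) _ (hconj1 t)
      have e2 := exp_skew_norm_le_one (H θ) (hsa θ hθ) _ (hconj2 t)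
      have h3 : ‖NormedSpace.exp ((Complex.I * t) • H θ) * H' θ *
          NormedSpace.exp ((-(Complex.I * t)) • H θ)‖ ≤ C := by
        calc ‖NormedSpace.exp ((Complex.I * t) • H θ) * H' θ *
              NormedSpace.exp ((-(Complex.I * t)) • H θ)‖
            ≤ ‖NormedSpace.exp ((Complex.I * t) • H θ) * H' θ‖ *
              ‖NormedSpace.exp ((-(Complex.I * t)) • H θ)‖ := norm_mul_le _ _
          _ ≤ (‖NormedSpace.exp ((Complex.I * t) • H θ)‖ * ‖H' θ‖) *
              ‖NormedSpace.exp ((-(Complex.I * t)) • H θ)‖ := by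
              gcongr
              exact norm_mul_le _ _
          _ ≤ (1 * ‖H' θ‖) * 1 := by gcongr <;> simp [e1, e2]
          _ = ‖H' θ‖ := by ring
          _ ≤ C := hC θ hθ
      calc |W t| * ‖_‖ ≤ |W t| * C := mul_le_mul_of_nonneg_left h3 (abs_nonneg _)
        _ = C * |W t| := mul_comm _ _
    calc ‖S θ‖ ≤ ∫ t : ℝ, C * |W t| := by
          rw [hS]
          exact norm_integral_le_of_norm_le (hWint.abs.const_mul C)
            (Filter.Eventually.of_forall hnormM)
      _ = C * ∫ t : ℝ, |W t| := integral_const_mul _ _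
  -- eigen-equation derivative identity
  have hder : ∀ θ ∈ Set.Icc 0 s, ∃ e' : ℂ,
      H' θ (ψ0 θ) + H θ (ψ0' θ) = e' • ψ0 θ + (E0 θ : ℂ) • ψ0' θ := by
    intro θ hθ
    set e : ℝ → ℂ := fun σ => ⟪ψ0 σ, H σ (ψ0 σ)⟫ with he
    have heE : ∀ σ ∈ Set.Icc 0 s, e σ = (E0 σ : ℂ) := by
      intro σ hσ
      show (⟪ψ0 σ, H σ (ψ0 σ)⟫ : ℂ) = _
      rw [heig σ hσ, inner_smul_right]
      have h1 : (⟪ψ0 σ, ψ0 σ⟫ : ℂ) = 1 := by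
        rw [inner_self_eq_norm_sq_to_K, hunit σ hσ]
        norm_num
      rw [h1, mul_one]
    have hL : HasDerivWithinAt (fun σ => H σ (ψ0 σ)) (H' θ (ψ0 θ) + H θ (ψ0' θ))
        (Set.Icc 0 s) θ := hasDerivWithinAt_clm_apply_c (hH θ hθ) (hψ0 θ hθ)
    have he' : HasDerivWithinAt e
        (⟪ψ0 θ, H' θ (ψ0 θ) + H θ (ψ0' θ)⟫ + ⟪ψ0' θ, H θ (ψ0 θ)⟫) (Set.Icc 0 s) θ :=
      HasDerivWithinAt.inner ℂ (hψ0 θ hθ) hL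
    have hR : HasDerivWithinAt (fun σ => e σ • ψ0 σ)
        (e θ • ψ0' θ + (⟪ψ0 θ, H' θ (ψ0 θ) + H θ (ψ0' θ)⟫ + ⟪ψ0' θ, H θ (ψ0 θ)⟫) • ψ0 θ)
        (Set.Icc 0 s) θ := he'.smul (hψ0 θ hθ)
    have hLR : ∀ σ ∈ Set.Icc 0 s, H σ (ψ0 σ) = e σ • ψ0 σ := by
      intro σ hσ
      rw [heE σ hσ, heig σ hσ]
    have hL2 : HasDerivWithinAt (fun σ => H σ (ψ0 σ))
        (e θ • ψ0' θ + (⟪ψ0 θ, H' θ (ψ0 θ) + H θ (ψ0' θ)⟫ + ⟪ψ0' θ, H θ (ψ0 θ)⟫) • ψ0 θ)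
        (Set.Icc 0 s) θ := hR.congr hLR (hLR θ hθ)
    have hud := uniqueDiffOn_Icc hs0 θ hθ
    have h1 := hL.derivWithin hud
    have h2 := hL2.derivWithin hud
    rw [h1] at h2
    have h3 : e θ • ψ0' θ +
        (⟪ψ0 θ, H' θ (ψ0 θ) + H θ (ψ0' θ)⟫ + ⟪ψ0' θ, H θ (ψ0 θ)⟫) • ψ0 θ
        = (⟪ψ0 θ, H' θ (ψ0 θ) + H θ (ψ0' θ)⟫ + ⟪ψ0' θ, H θ (ψ0 θ)⟫) • ψ0 θ
          + (E0 θ : ℂ) • ψ0' θ := by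
      rw [heE θ hθ]
      abel
    exact ⟨_, h2.trans h3⟩
  -- the vector field
  set K0 : ℝ := C * ∫ t : ℝ, |W t| with hK0
  have hK0nn : 0 ≤ K0 := by
    have h1 : 0 ≤ C := le_trans (norm_nonneg _) (hC 0 ⟨le_refl 0, hs⟩)
    have h2 : 0 ≤ ∫ t : ℝ, |W t| := integral_nonneg fun t => abs_nonneg _
    positivity
  set K : NNReal := K0.toNNReal with hK
  set v : ℝ → V → V := fun t x => if t ∈ Set.Icc 0 s then Complex.I • S t x else 0 with hv
  have hvlip : ∀ t : ℝ, LipschitzWith K (v t) := by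
    intro t
    by_cases ht : t ∈ Set.Icc 0 s
    · have hle : ‖Complex.I • S t‖₊ ≤ K := by
        rw [← NNReal.coe_le_coe, coe_nnnorm, hK, Real.coe_toNNReal _ hK0nn]
        rw [norm_smul, Complex.norm_I, one_mul]
        exact hSb t ht
      have := (Complex.I • S t).lipschitz.weaken hle
      simp only [hv, if_pos ht]
      exact this
    · simp only [hv, if_neg ht]
      exact LipschitzWith.const' 0
  -- the two solutions
  have hmemIci : ∀ t ∈ Set.Ico 0 s, Set.Icc 0 s ∈ nhdsWithin t (Set.Ici t) := by
    intro t ht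
    rw [mem_nhdsWithin]
    exact ⟨Set.Iio s, isOpen_Iio, ht.2, fun x hx => ⟨ht.1.trans hx.2, hx.1.le⟩⟩
  have hfc : ContinuousOn (fun θ => U θ (ψ0 0)) (Set.Icc 0 s) := by
    have hUc : ContinuousOn U (Set.Icc 0 s) := fun θ hθ => (hU θ hθ).continuousWithinAt
    exact (ContinuousLinearMap.apply ℂ V (ψ0 0)).continuous.comp_continuousOn hUc
  have hgc : ContinuousOn ψ0 (Set.Icc 0 s) := fun θ hθ => (hψ0 θ hθ).continuousWithinAt
  have hf' : ∀ t ∈ Set.Ico 0 s, HasDerivWithinAt (fun θ => U θ (ψ0 0))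
      (v t (U t (ψ0 0))) (Set.Ici t) t := by
    intro t ht
    have htIcc : t ∈ Set.Icc 0 s := Set.Ico_subset_Icc_self ht
    have hd := ((ContinuousLinearMap.apply ℂ V (ψ0 0)).restrictScalars
      ℝ).hasFDerivAt.comp_hasDerivWithinAt t (hU t htIcc)
    have hd2 := hd.mono_of_mem_nhdsWithin (hmemIci t ht)
    have heq : ((ContinuousLinearMap.apply ℂ V (ψ0 0)).restrictScalars ℝ)
        (Complex.I • (S t * U t)) = v t (U t (ψ0 0)) := by
      simp only [hv, if_pos htIcc]
      rfl
    rw [← heq]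
    exact hd2
  have hg' : ∀ t ∈ Set.Ico 0 s, HasDerivWithinAt ψ0 (v t (ψ0 t)) (Set.Ici t) t := by
    intro t ht
    have htIcc : t ∈ Set.Icc 0 s := Set.Ico_subset_Icc_self ht
    obtain ⟨e', he'⟩ := hder t htIcc
    have hkey : Complex.I • (S t) (ψ0 t) = ψ0' t :=
      quasi_key Δ hΔ W hWint hWodd hWfourier (H t) (H' t) (E0 t) (ψ0 t) (ψ0' t) e'
        (hsa t htIcc) (heig t htIcc) (hsimple t htIcc) (hgap t htIcc) (hpar t htIcc) he'
        (hFint t htIcc)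
    have hd2 := (hψ0 t htIcc).mono_of_mem_nhdsWithin (hmemIci t ht)
    have heq : v t (ψ0 t) = ψ0' t := by
      simp only [hv, if_pos htIcc]
      exact hkey
    rw [heq]
    exact hd2
  have ha : U 0 (ψ0 0) = ψ0 0 := by rw [hU0]; rfl
  have := ODE_solution_unique hvlip hfc hf' hgc hg' ha
  intro θ hθ
  exact this hθ
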